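/- Let Γ be a group, M : ℕ, n : Fin M → ℕ with n l ≥ 1 for all l, and for each l : Fin M let σ l : Γ → Γ → ZMod (n l) satisfy the 2-cocycle identity σ l g₁ g₂ + σ l (g₁ * g₂) g₃ = σ l g₂ g₃ + σ l g₁ (g₂ * g₃) for all g₁ g₂ g₃ : Γ. Let H := Π l : Fin M, ZMod (n l) (an additive group) and give Γ × H the product group structure. Define ω : (Γ × H) → (Γ × H) → (Γ × H) → ℂ by ω x y z := Π l : Fin M, Complex.exp (2 * π * Complex.I * (((x.2 l) * (σ l y.1 z.1)).val : ℂ) / (n l)). Then ω satisfies the multiplicative 3-cocycle identity: for all x₁ x₂ x₃ x₄ : Γ × H, ω x₂ x₃ x₄ * ω x₁ (x₂ * x₃) x₄ * ω x₁ x₂ x₃ = ω (x₁ * x₂) x₃ x₄ * ω x₁ x₂ (x₃ * x₄). -/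

import Mathlib

noncomputable section

/-- The anomaly 3-cocycle `ω x y z = ∏_l exp(2πi (x.2 l) σ_l(y.1, z.1) / n_l)`
of the symmetry category obtained by enhancing an on-site symmetry group `Γ` by
the group `H = Π_l ℤ/n_l` of SPT-stacking operations, where the SPT phases are
classified by 2-cocycles `σ_l`.  Here `H` is the additive group
`Π l, ZMod (n l)`, rendered multiplicatively via `Multiplicative` so that
`Γ × H` carries the product group structure. -/
def anomalyCocycle {Γ : Type*} [Group Γ] {M : ℕ} {n : Fin M → ℕ}
    (σ : ∀ l : Fin M, Γ → Γ → ZMod (n l))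
    (x y z : Γ × (∀ l : Fin M, Multiplicative (ZMod (n l)))) : ℂ :=
  ∏ l : Fin M,
    Complex.exp (2 * Real.pi * Complex.I *
      (((Multiplicative.toAdd (x.2 l)) * σ l y.1 z.1).val : ℂ) / (n l))

lemma expPhase_add (N : ℕ) (hN : 1 ≤ N) (a b : ZMod N) :
    Complex.exp (2 * Real.pi * Complex.I * (((a + b).val : ℂ)) / N) =
      Complex.exp (2 * Real.pi * Complex.I * ((a.val : ℂ)) / N) *
        Complex.exp (2 * Real.pi * Complex.I * ((b.val : ℂ)) / N) := by
  have : NeZero N := ⟨by omega⟩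
  have hNC : (N : ℂ) ≠ 0 := by exact_mod_cast (by omega : N ≠ 0)
  rw [← Complex.exp_add]
  have hval : (a + b).val = (a.val + b.val) % N := ZMod.val_add a b
  have hdiv : (a.val + b.val) % N + N * ((a.val + b.val) / N) = a.val + b.val :=
    Nat.mod_add_div _ _
  set k : ℕ := (a.val + b.val) / N
  have hcast : ((((a.val + b.val) % N : ℕ)) : ℂ) = (a.val : ℂ) + b.val - N * k := by
    have := congrArg (fun m : ℕ => (m : ℂ)) hdiv
    push_cast at this
    linear_combination this
  rw [hval, hcast]
  have key : 2 * (Real.pi : ℂ) * Complex.I * ((a.val : ℂ) + b.val - N * k) / N =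
      (2 * (Real.pi : ℂ) * Complex.I * (a.val : ℂ) / N +
        2 * (Real.pi : ℂ) * Complex.I * (b.val : ℂ) / N) +
        (-(k : ℤ)) * (2 * Real.pi * Complex.I) := by
    field_simp
    rw [Int.cast_natCast]
    ring
  rw [key, Complex.exp_add]
  have h1 : Complex.exp (-((k : ℤ) : ℂ) * (2 * Real.pi * Complex.I)) = 1 := by
    simpa using Complex.exp_int_mul_two_pi_mul_I (-(k : ℤ))
  rw [h1, mul_one]

/-- if each `σ l` satisfies the 2-cocycle identity, then the
anomaly phase `ω` obtained by the Else–Nayak procedure from stacking Γ-SPT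
phases satisfies the multiplicative 3-cocycle identity on the product group
`Γ × Π_l ℤ/n_l`. -/
theorem anomalyCocycle_is_3cocycle {Γ : Type*} [Group Γ] {M : ℕ}
    {n : Fin M → ℕ} (hn : ∀ l, 1 ≤ n l)
    (σ : ∀ l : Fin M, Γ → Γ → ZMod (n l))
    (hσ : ∀ (l : Fin M) (g₁ g₂ g₃ : Γ),
      σ l g₁ g₂ + σ l (g₁ * g₂) g₃ = σ l g₂ g₃ + σ l g₁ (g₂ * g₃))
    (x₁ x₂ x₃ x₄ : Γ × (∀ l : Fin M, Multiplicative (ZMod (n l)))) :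
    anomalyCocycle σ x₂ x₃ x₄ * anomalyCocycle σ x₁ (x₂ * x₃) x₄ *
        anomalyCocycle σ x₁ x₂ x₃ =
      anomalyCocycle σ (x₁ * x₂) x₃ x₄ * anomalyCocycle σ x₁ x₂ (x₃ * x₄) := by
  unfold anomalyCocycle
  rw [← Finset.prod_mul_distrib, ← Finset.prod_mul_distrib, ← Finset.prod_mul_distrib]
  refine Finset.prod_congr rfl fun l _ => ?_
  set E : ZMod (n l) → ℂ :=
    fun t => Complex.exp (2 * Real.pi * Complex.I * ((t.val : ℂ)) / (n l)) with hE
  have hEadd : ∀ a b : ZMod (n l), E (a + b) = E a * E b :=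
    fun a b => expPhase_add (n l) (hn l) a b
  show E _ * E _ * E _ = E _ * E _
  rw [← hEadd, ← hEadd, ← hEadd]
  congr 1
  simp only [Prod.fst_mul, Prod.snd_mul, Pi.mul_apply, toAdd_mul]
  have h2 : σ l (x₂.1 * x₃.1) x₄.1 + σ l x₂.1 x₃.1 =
      σ l x₃.1 x₄.1 + σ l x₂.1 (x₃.1 * x₄.1) := by
    linear_combination hσ l x₂.1 x₃.1 x₄.1
  calc Multiplicative.toAdd (x₂.2 l) * σ l x₃.1 x₄.1 +
        Multiplicative.toAdd (x₁.2 l) * σ l (x₂.1 * x₃.1) x₄.1 +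
        Multiplicative.toAdd (x₁.2 l) * σ l x₂.1 x₃.1
      = Multiplicative.toAdd (x₂.2 l) * σ l x₃.1 x₄.1 +
          Multiplicative.toAdd (x₁.2 l) *
            (σ l (x₂.1 * x₃.1) x₄.1 + σ l x₂.1 x₃.1) := by ring
    _ = _ := by rw [h2]; ring

end
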